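/- Let k be a finite field, ψ a nontrivial additive character of k, and χ₁,…,χₙ, ρ₁,…,ρₙ multiplicative characters of kˣ with χᵢ ≠ ρⱼ for all i,j. Then for every a ∈ kˣ with a ≠ 1 (corresponding to a point of ℙ¹ − {0,1,∞}): ∑_{x₁⋯xₙ = a·y₁⋯yₙ, xᵢ,yⱼ ∈ kˣ} ψ(∑xᵢ − ∑yⱼ)·∏χᵢ(xᵢ)·∏ρⱼ(yⱼ)⁻¹ = ∏_{i=1}^n G(ψ, χᵢρᵢ⁻¹) · ∑_{z₁⋯zₙ = a, zᵢ ∉ {0,1}} ∏_{i=1}^n χᵢ(zᵢ)·(χᵢ⁻¹ρᵢ)(zᵢ − 1), where G(ψ, χ) = ∑_{w ∈ kˣ} ψ(w)χ(w). -/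

import Mathlib

open Finset

/-- Extension by zero of a multiplicative character `kˣ → ℂˣ` to the field `k`. -/
noncomputable def extChar {k : Type*} [Field k] [DecidableEq k]
    (χ : kˣ →* ℂˣ) (x : k) : ℂ :=
  if h : x ≠ 0 then (χ (Units.mk0 x h) : ℂ) else 0

set_option linter.unusedSectionVars false
section aux
variable {k : Type*} [Field k] [Fintype k] [DecidableEq k]

lemma addChar_sum {ι : Type*} (ψ : AddChar k ℂ) (s : Finset ι) (f : ι → k) :
    ψ (∑ i ∈ s, f i) = ∏ i ∈ s, ψ (f i) := by
  induction s using Finset.cons_induction with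
  | empty => simp [ψ.map_zero_eq_one]
  | cons i s hi ih => simp [Finset.sum_cons, Finset.prod_cons, ψ.map_add_eq_mul, ih]

lemma sum_char_eq_zero (φ : kˣ →* ℂˣ) (hφ : φ ≠ 1) : ∑ y : kˣ, (φ y : ℂ) = 0 := by
  obtain ⟨u, hu⟩ : ∃ u, φ u ≠ 1 := by
    by_contra h
    push_neg at h
    exact hφ (MonoidHom.ext fun u => (h u).trans rfl)
  have h1 : (φ u : ℂ) * ∑ y : kˣ, (φ y : ℂ) = ∑ y : kˣ, (φ y : ℂ) := by
    rw [Finset.mul_sum]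
    exact Fintype.sum_equiv (Equiv.mulLeft u) _ _ (fun y => by simp)
  have h2 : ((φ u : ℂ) - 1) * ∑ y : kˣ, (φ y : ℂ) = 0 := by
    rw [sub_mul, one_mul, h1, sub_self]
  rcases mul_eq_zero.mp h2 with h | h
  · rw [sub_eq_zero] at h
    exact absurd (Units.ext (by simpa using h)) hu
  · exact h

lemma key_sum (ψ : AddChar k ℂ) (φ : kˣ →* ℂˣ) (hφ : φ ≠ 1) (c : k) :
    ∑ y : kˣ, ψ (c * y) * (φ y : ℂ)
      = extChar φ⁻¹ c * ∑ w : kˣ, ψ (w : k) * (φ w : ℂ) := by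
  rcases eq_or_ne c 0 with rfl | hc
  · simp [extChar, ψ.map_zero_eq_one, sum_char_eq_zero φ hφ]
  · set u := Units.mk0 c hc with hu
    have step : ∀ y : kˣ, ψ (c * y) * (φ y : ℂ)
        = ((φ⁻¹ u : ℂˣ) : ℂ) * (ψ ((u * y : kˣ) : k) * (φ (u * y) : ℂ)) := by
      intro y
      have : ((u * y : kˣ) : k) = c * y := by simp [hu]
      rw [this, map_mul φ, MonoidHom.inv_apply]
      push_cast
      have hne : (φ u : ℂ) ≠ 0 := Units.ne_zero _
      field_simp
    simp only [step]
    rw [← Finset.mul_sum]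
    congr 1
    · simp [extChar, hc, hu]
    · exact Fintype.sum_equiv (Equiv.mulLeft u) _ _ (fun y => rfl)

lemma sum_units_pi {n : ℕ} (f : (Fin n → k) → ℂ)
    (hf : ∀ z : Fin n → k, (∃ i, z i = 0) → f z = 0) :
    ∑ z : Fin n → k, f z = ∑ z : Fin n → kˣ, f (fun i => z i) := by
  classical
  have himg : ∑ z ∈ (Finset.univ : Finset (Fin n → kˣ)).image (fun z i => (z i : k)), f z
      = ∑ z : Fin n → kˣ, f (fun i => z i) :=
    Finset.sum_image (g := fun (z : Fin n → kˣ) (i : Fin n) => (z i : k)) (f := f)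
      (fun x _ y _ h => funext fun i => Units.ext (congrFun h i))
  rw [← himg]
  refine (Finset.sum_subset (Finset.subset_univ _) ?_).symm
  intro z _ hz
  apply hf
  by_contra h
  push_neg at h
  exact hz (Finset.mem_image.mpr ⟨fun i => Units.mk0 (z i) (h i), Finset.mem_univ _, by
    funext i; simp⟩)

end aux

/-- The finite hypergeometric sum equals, up to the product of the Gauss sums
`G(ψ, χᵢρᵢ⁻¹)`, the trace of the Hecke eigenvalue: for `a ∈ ℙ¹ − {0,1,∞}`,
`∑_{x₁⋯xₙ = a·y₁⋯yₙ} ψ(∑xᵢ − ∑yⱼ)·∏χᵢ(xᵢ)·∏ρⱼ(yⱼ)⁻¹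
  = ∏ᵢ G(ψ, χᵢρᵢ⁻¹) · ∑_{z₁⋯zₙ = a, zᵢ∉{0,1}} ∏ᵢ χᵢ(zᵢ)·(χᵢ⁻¹ρᵢ)(zᵢ − 1)`. -/
theorem tame_hypergeometric_trace_identity
    (k : Type*) [Field k] [Fintype k] [DecidableEq k]
    (n : ℕ) (ψ : AddChar k ℂ) (hψ : ψ ≠ 1)
    (χ ρ : Fin n → (kˣ →* ℂˣ))
    (hdisj : ∀ i j, χ i ≠ ρ j)
    (a : kˣ) (ha : a ≠ 1) :
    (∑ x : Fin n → kˣ, ∑ y : Fin n → kˣ,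
      if (∏ i, x i) = a * ∏ i, y i then
        ψ ((∑ i, ((x i : k))) - ∑ i, ((y i : k))) *
          (∏ i, ((χ i) (x i) : ℂ)) * ∏ i, (((ρ i) (y i) : ℂ))⁻¹
      else 0)
    = (∏ i, ∑ w : kˣ, ψ (w : k) * (((χ i) * (ρ i)⁻¹) w : ℂ)) *
      ∑ z : Fin n → k,
        if (∏ i, z i) = (a : k) ∧ ∀ i, z i ≠ 0 ∧ z i ≠ 1 then
          ∏ i, extChar (χ i) (z i) * extChar ((χ i)⁻¹ * (ρ i)) (z i - 1)
        else 0 := by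
  classical
  have hne : ∀ i, (χ i) * (ρ i)⁻¹ ≠ 1 := fun i h =>
    hdisj i i (mul_inv_eq_one.mp h)
  set G : Fin n → ℂ := fun i => ∑ w : kˣ, ψ (w : k) * (((χ i) * (ρ i)⁻¹) w : ℂ) with hGdef
  have step1 : (∑ x : Fin n → kˣ, ∑ y : Fin n → kˣ,
      if (∏ i, x i) = a * ∏ i, y i then
        ψ ((∑ i, ((x i : k))) - ∑ i, ((y i : k))) *
          (∏ i, ((χ i) (x i) : ℂ)) * ∏ i, (((ρ i) (y i) : ℂ))⁻¹
      else 0)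
    = ∑ z : Fin n → kˣ, ∑ y : Fin n → kˣ,
      if (∏ i, z i) = a then
        ∏ i, (((χ i) (z i) : ℂ) *
          (ψ (((z i : k) - 1) * (y i : k)) * (((χ i) * (ρ i)⁻¹) (y i) : ℂ)))
      else 0 := by
    refine Finset.sum_comm.trans (Eq.trans ?_ Finset.sum_comm)
    refine Finset.sum_congr rfl fun y _ => ?_
    refine Eq.symm (Fintype.sum_equiv (Equiv.mulRight y)
      (fun z => if (∏ i, z i) = a then
        ∏ i, (((χ i) (z i) : ℂ) *
          (ψ (((z i : k) - 1) * (y i : k)) * (((χ i) * (ρ i)⁻¹) (y i) : ℂ)))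
      else 0) _ fun z => ?_)
    simp only [Equiv.coe_mulRight, Pi.mul_apply]
    have hcond : ((∏ i, z i * y i) = a * ∏ i, y i) ↔ (∏ i, z i) = a := by
      rw [Finset.prod_mul_distrib, mul_left_inj]
    simp only [hcond]
    by_cases hP : (∏ i, z i) = a
    · rw [if_pos hP, if_pos hP]
      have hψeq : ψ ((∑ i, ((z i * y i : kˣ) : k)) - ∑ i, ((y i : k)))
          = ∏ i, ψ (((z i : k) - 1) * (y i : k)) := by
        rw [← Finset.sum_sub_distrib, addChar_sum]
        refine Finset.prod_congr rfl fun i _ => ?_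
        push_cast
        ring_nf
      rw [hψeq]
      rw [← Finset.prod_mul_distrib, ← Finset.prod_mul_distrib]
      refine Finset.prod_congr rfl fun i _ => ?_
      simp only [map_mul, MonoidHom.mul_apply, MonoidHom.inv_apply]
      push_cast
      ring
    · rw [if_neg hP, if_neg hP]
  rw [step1]
  have step2 : (∑ z : Fin n → kˣ, ∑ y : Fin n → kˣ,
      if (∏ i, z i) = a then
        ∏ i, (((χ i) (z i) : ℂ) *
          (ψ (((z i : k) - 1) * (y i : k)) * (((χ i) * (ρ i)⁻¹) (y i) : ℂ)))
      else 0)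
    = ∑ z : Fin n → kˣ,
      if (∏ i, z i) = a then
        ∏ i, (((χ i) (z i) : ℂ) *
          (extChar ((χ i)⁻¹ * (ρ i)) ((z i : k) - 1) * G i))
      else 0 := by
    refine Finset.sum_congr rfl fun z _ => ?_
    by_cases hP : (∏ i, z i) = a
    · simp only [if_pos hP]
      rw [← Fintype.prod_sum fun i (y : kˣ) => ((χ i) (z i) : ℂ) *
          (ψ (((z i : k) - 1) * (y : k)) * (((χ i) * (ρ i)⁻¹) y : ℂ))]
      refine Finset.prod_congr rfl fun i _ => ?_
      rw [← Finset.mul_sum, key_sum ψ ((χ i) * (ρ i)⁻¹) (hne i) ((z i : k) - 1)]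
      have hinv : ((χ i) * (ρ i)⁻¹)⁻¹ = (χ i)⁻¹ * ρ i :=
        MonoidHom.ext fun x => by simp [mul_comm]
      rw [hinv]
    · simp [if_neg hP]
  rw [step2]
  have step3 : (∑ z : Fin n → kˣ,
      if (∏ i, z i) = a then
        ∏ i, (((χ i) (z i) : ℂ) *
          (extChar ((χ i)⁻¹ * (ρ i)) ((z i : k) - 1) * G i))
      else 0)
    = (∏ i, G i) * ∑ z : Fin n → kˣ,
        if (∏ i, z i) = a then
          ∏ i, (((χ i) (z i) : ℂ) * extChar ((χ i)⁻¹ * (ρ i)) ((z i : k) - 1))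
        else 0 := by
    rw [Finset.mul_sum]
    refine Finset.sum_congr rfl fun z _ => ?_
    by_cases hP : (∏ i, z i) = a
    · simp only [if_pos hP]
      rw [← Finset.prod_mul_distrib]
      refine Finset.prod_congr rfl fun i _ => ?_
      ring
    · simp [if_neg hP]
  rw [step3]
  congr 1
  rw [sum_units_pi (fun z => if (∏ i, z i) = (a : k) ∧ ∀ i, z i ≠ 0 ∧ z i ≠ 1 then
      ∏ i, extChar (χ i) (z i) * extChar ((χ i)⁻¹ * (ρ i)) (z i - 1) else 0)
    (by
      intro z hz
      obtain ⟨i, hi⟩ := hz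
      rw [if_neg]
      rintro ⟨-, h⟩
      exact (h i).1 hi)]
  refine Finset.sum_congr rfl fun z _ => ?_
  dsimp only
  have hprod : (∏ i, ((z i : kˣ) : k)) = ((∏ i, z i : kˣ) : k) := by
    push_cast
    rfl
  by_cases hP : (∏ i, z i) = a
  · by_cases h1 : ∀ i, z i ≠ 1
    · rw [if_pos hP, if_pos ⟨by rw [hprod, hP],
        fun i => ⟨Units.ne_zero _, fun h => h1 i (Units.ext (by simpa using h))⟩⟩]
      refine Finset.prod_congr rfl fun i _ => ?_
      congr 1
      simp [extChar]
    · push_neg at h1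
      obtain ⟨i, hi⟩ := h1
      rw [if_pos hP, if_neg (by
        rintro ⟨-, h⟩
        exact (h i).2 (by rw [hi, Units.val_one]))]
      refine Finset.prod_eq_zero (Finset.mem_univ i) ?_
      rw [hi]
      simp [extChar]
  · rw [if_neg hP, if_neg (by
      rintro ⟨h, -⟩
      exact hP (Units.ext (by rw [← hprod, h])))]
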